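/- Let F = a·∏_{i=1}^n (X − z_i) ∈ ℂ[X] with a ≠ 0 and n = deg F ≥ 2, where z_1,…,z_n are the roots listed with multiplicity. Let k be an integer with 0 ≤ k ≤ n, let K ∈ ℝ with K ≥ 1, and let c_1, c_2 ∈ ℝ satisfy c_2·n·ln((1 + 2K)/(2K)) ≥ c_1·n ≥ max(1,k)/ln(1 + 1/(8K)). Let m ∈ ℂ and r > 0, and assume |z_i − m| < r for 1 ≤ i ≤ k and |z_i − m| ≥ 4·c_2·max(1,k)·n³·r for k < i ≤ n. Then F^{(k)}(m) ≠ 0 and ∑_{i=k+1}^{n} |F^{(i)}(m)|·(c_1·n·r)^{i−k}·k! / (|F^{(k)}(m)|·i!) < 1/(2K). -/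

import Mathlib

open Polynomial Finset

/-- Upper Bernoulli: `(1+x)^m * (1 - m*x) ≤ 1` for `x ≥ 0`. -/
lemma TTS_bern (x : ℝ) (hx : 0 ≤ x) : ∀ m : ℕ, (1+x)^m * (1 - m*x) ≤ 1 := by
  intro m
  induction m with
  | zero => simp
  | succ m ih =>
    rcases le_or_gt (1 - (m+1 : ℕ)*x) 0 with h | h
    · have h1 : (0:ℝ) ≤ (1+x)^(m+1) := by positivity
      nlinarith
    · have h1 : (0:ℝ) ≤ (1+x)^m := by positivity
      have hc : ((m+1 : ℕ):ℝ) = (m:ℝ) + 1 := by push_cast; ring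
      rw [pow_succ, hc] at *
      nlinarith [mul_nonneg h1 hx, mul_nonneg (mul_nonneg h1 hx) hx,
        mul_nonneg (mul_nonneg h1 hx) (Nat.cast_nonneg m : (0:ℝ) ≤ m)]

lemma TTS_pow_le {x c : ℝ} (hx : 0 ≤ x) (m : ℕ) (h : (m:ℝ)*x ≤ c) (hc : c < 1) :
    (1+x)^m ≤ 1/(1-c) := by
  have hb := TTS_bern x hx m
  have h1 : 0 < 1 - (m:ℝ)*x := by linarith
  have h2 : (1+x)^m ≤ 1/(1-(m:ℝ)*x) := by rw [le_div_iff₀ h1]; exact hb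
  have h3 : 1/(1-(m:ℝ)*x) ≤ 1/(1-c) :=
    one_div_le_one_div_of_le (by linarith) (by linarith)
  linarith

/-- Generating function identity for elementary symmetric sums. -/
lemma TTS_gf (n : ℕ) (A : ℕ → ℝ) (σ : ℝ) :
    ∑ d ∈ range (n+1), (∑ t ∈ Finset.powersetCard d (range n), ∏ j ∈ t, A j) * σ^(n-d)
      = ∏ j ∈ range n, (A j + σ) := by
  rw [Finset.prod_add]
  rw [Finset.sum_powerset, card_range]
  refine Finset.sum_congr rfl fun d hd => ?_
  rw [Finset.sum_mul]
  refine Finset.sum_congr rfl fun t ht => ?_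
  rw [Finset.mem_powersetCard] at ht
  rw [Finset.prod_const, card_sdiff_of_subset ht.1, card_range, ht.2]

/-- Evaluation of iterated derivatives via Vieta. -/
lemma TTS_deriv_eval (n : ℕ) (a : ℂ) (z : ℕ → ℂ) (m : ℂ) (F : Polynomial ℂ)
    (hF : F = Polynomial.C a * ∏ i ∈ Finset.range n, (Polynomial.X - Polynomial.C (z i)))
    (i : ℕ) (hi : i ≤ n) :
    (Polynomial.derivative^[i] F).eval m
      = (i.factorial : ℂ) *
        (a * ∑ t ∈ Finset.powersetCard (n-i) (range n), ∏ j ∈ t, (m - z j)) := by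
  have h1 : Polynomial.derivative^[i] F = i.factorial • Polynomial.hasseDeriv i F := by
    rw [← Polynomial.factorial_smul_hasseDeriv]; rfl
  have h2 : (Polynomial.hasseDeriv i F).eval m = (taylor m F).coeff i :=
    (Polynomial.taylor_coeff m F i).symm
  have h3 : taylor m F
      = Polynomial.C a * ∏ j ∈ Finset.range n, (Polynomial.X + Polynomial.C (m - z j)) := by
    rw [hF]
    show Polynomial.taylorAlgHom m _ = _
    rw [map_mul, map_prod]
    simp only [Polynomial.taylorAlgHom_apply, Polynomial.taylor_C]
    congr 1
    refine Finset.prod_congr rfl fun j _ => ?_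
    rw [map_sub]
    simp only [Polynomial.taylorAlgHom_apply, Polynomial.taylor_X, Polynomial.taylor_C]
    rw [Polynomial.C_sub]
    ring
  have h4 : (taylor m F).coeff i
      = a * ∑ t ∈ Finset.powersetCard (n-i) (range n), ∏ j ∈ t, (m - z j) := by
    rw [h3, Polynomial.coeff_C_mul]
    rw [Finset.prod_X_add_C_coeff _ _ (by rwa [card_range]), card_range]
  rw [h1, Polynomial.eval_smul, h2, h4, nsmul_eq_mul]

set_option maxHeartbeats 4000000

/-- **Tail estimate for the Taylor coefficients at `m`** (second assertion of the first
appendix lemma): if `D(m,r)` is `(1, 4c₂·max(1,k)·n³)`-isolating for the roots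
`z_1, …, z_k` of `F = a·∏ (X − z_i)`, then `F^{(k)}(m) ≠ 0` and
`∑_{i=k+1}^{n} |F^{(i)}(m)|·(c₁nr)^{i−k}·k! / (|F^{(k)}(m)|·i!) < 1/(2K)`. -/
theorem taylor_tail_small (n : ℕ) (hn : 2 ≤ n) (a : ℂ) (ha : a ≠ 0) (z : ℕ → ℂ)
    (F : Polynomial ℂ)
    (hF : F = Polynomial.C a * ∏ i ∈ Finset.range n, (Polynomial.X - Polynomial.C (z i)))
    (k : ℕ) (hk : k ≤ n) (K : ℝ) (hK : 1 ≤ K) (c₁ c₂ : ℝ)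
    (hc₂ : c₁ * n ≤ c₂ * n * Real.log ((1 + 2 * K) / (2 * K)))
    (hc₁ : max 1 (k : ℝ) / Real.log (1 + 1 / (8 * K)) ≤ c₁ * n)
    (m : ℂ) (r : ℝ) (hr : 0 < r)
    (hin : ∀ i, i < k → ‖z i - m‖ < r)
    (hout : ∀ i, k ≤ i → i < n → 4 * c₂ * max 1 (k : ℝ) * n ^ 3 * r ≤ ‖z i - m‖) :
    (Polynomial.derivative^[k] F).eval m ≠ 0 ∧
    ∑ i ∈ Finset.Icc (k + 1) n,
        ‖(Polynomial.derivative^[i] F).eval m‖ * (c₁ * n * r) ^ (i - k) *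
          (Nat.factorial k) /
          (‖(Polynomial.derivative^[k] F).eval m‖ * (Nat.factorial i)) <
      1 / (2 * K) := by
  -- basic positivity
  have hK0 : (0:ℝ) < K := by linarith
  have hKne : K ≠ 0 := ne_of_gt hK0
  have hn0 : 0 < n := by omega
  have hnR : (0:ℝ) < n := by exact_mod_cast hn0
  have hnzn : (n:ℝ) ≠ 0 := ne_of_gt hnR
  have hrz : r ≠ 0 := ne_of_gt hr
  have hn2 : (2:ℝ) ≤ n := by exact_mod_cast hn
  set M : ℝ := max 1 (k:ℝ) with hM
  have hM1 : (1:ℝ) ≤ M := le_max_left _ _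
  have hMk : (k:ℝ) ≤ M := le_max_right _ _
  have hM0 : (0:ℝ) < M := by linarith
  have hMz : M ≠ 0 := ne_of_gt hM0
  -- log facts
  have hlog8 : Real.log (1 + 1/(8*K)) ≤ 1/(8*K) := by
    have := Real.log_le_sub_one_of_pos (x := 1 + 1/(8*K)) (by positivity)
    linarith
  have hlog8pos : 0 < Real.log (1 + 1/(8*K)) := Real.log_pos (by
    have : (0:ℝ) < 1/(8*K) := by positivity
    linarith)
  -- 8 K M ≤ c₁ n
  have hc1n : 8*K*M ≤ c₁*n := by
    have h1 : M/(1/(8*K)) ≤ M/Real.log (1 + 1/(8*K)) :=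
      div_le_div_of_nonneg_left (by linarith) hlog8pos hlog8
    have h2 : M/(1/(8*K)) = 8*K*M := by
      field_simp
    linarith [hc₁]
  have hc1npos : 0 < c₁*n := lt_of_lt_of_le (by positivity) hc1n
  have hc1pos : 0 < c₁ := by
    by_contra h
    push_neg at h
    nlinarith only [hc1npos, hnR, mul_nonneg (neg_nonneg.2 h) hnR.le]
  have hc1z : c₁ ≠ 0 := ne_of_gt hc1pos
  -- 2 K c₁ n ≤ c₂ n
  have h2K : (1 + 2*K)/(2*K) = 1 + 1/(2*K) := by
    field_simp
    ring
  have hlog2 : Real.log ((1 + 2*K)/(2*K)) ≤ 1/(2*K) := by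
    rw [h2K]
    have := Real.log_le_sub_one_of_pos (x := 1 + 1/(2*K)) (by positivity)
    linarith
  have hlog2pos : 0 < Real.log ((1 + 2*K)/(2*K)) := by
    rw [h2K]
    refine Real.log_pos ?_
    have : (0:ℝ) < 1/(2*K) := by positivity
    linarith
  have hc2npos : 0 < c₂*n := by
    rcases le_or_gt (c₂*n) 0 with h | h
    · exfalso
      have : c₂*n*Real.log ((1 + 2*K)/(2*K)) ≤ 0 :=
        mul_nonpos_of_nonpos_of_nonneg h hlog2pos.le
      linarith
    · exact h
  have hc2n : 2*K*(c₁*n) ≤ c₂*n := by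
    have h1 : c₁*n ≤ c₂*n*(1/(2*K)) :=
      le_trans hc₂ (mul_le_mul_of_nonneg_left hlog2 hc2npos.le)
    have h3 : 2*K*(c₂*n*(1/(2*K))) = c₂*n := by
      field_simp
    have h4 := mul_le_mul_of_nonneg_left h1 (by linarith : (0:ℝ) ≤ 2*K)
    linarith only [h3, h4]
  have hc2pos : 0 < c₂ := by
    by_contra h
    push_neg at h
    nlinarith only [hc2npos, hnR, mul_nonneg (neg_nonneg.2 h) hnR.le]
  have hnz : c₂ ≠ 0 := ne_of_gt hc2pos
  have hc2c1 : 2*K*c₁ ≤ c₂ := by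
    by_contra h
    push_neg at h
    nlinarith only [mul_pos (sub_pos.2 h) hnR, hc2n]
  have hc2nM : 16*M ≤ c₂*n := by
    nlinarith only [mul_le_mul_of_nonneg_left hc1n (by linarith : (0:ℝ) ≤ 2*K), hc2n,
      mul_nonneg (mul_nonneg (mul_nonneg (by norm_num : (0:ℝ) ≤ 16)
        (sub_nonneg.2 hK)) (by linarith : (0:ℝ) ≤ K+1)) hM0.le]
  have hMn2 : (2:ℝ) ≤ M*n := by
    nlinarith only [mul_le_mul_of_nonneg_right hM1 hnR.le, hn2]
  -- abbreviations (made opaque with clear_value)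
  set A : ℕ → ℝ := fun j => ‖m - z j‖ with hA
  set R : ℝ := 4*c₂*M*(n:ℝ)^3*r with hRdef
  set ρ : ℝ := c₁*(n:ℝ)*r with hρdef
  set σ₁ : ℝ := c₂*M*(n:ℝ)^2*r/2 with hσ₁def
  set σ₂ : ℝ := 4*K*ρ with hσ₂def
  clear_value A R ρ σ₁ σ₂
  have hR0 : 0 < R := by
    rw [hRdef]
    have h3 : (0:ℝ) < (n:ℝ)^3 := by positivity
    have h4 : (0:ℝ) < 4*c₂ := by linarith
    exact mul_pos (mul_pos (mul_pos h4 hM0) h3) hr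
  have hρ0 : 0 < ρ := by
    rw [hρdef]; exact mul_pos (mul_pos hc1pos hnR) hr
  have hσ₁0 : 0 < σ₁ := by
    rw [hσ₁def]
    have h2 : (0:ℝ) < (n:ℝ)^2 := by positivity
    have := mul_pos (mul_pos (mul_pos hc2pos hM0) h2) hr
    linarith
  have hσ₂0 : 0 < σ₂ := by
    rw [hσ₂def]; exact mul_pos (by linarith) hρ0
  have hA0 : ∀ j, 0 ≤ A j := by
    intro j; simp only [hA]; exact norm_nonneg _
  have hA_in : ∀ j, j < k → A j < r := by
    intro j hj
    simp only [hA]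
    rw [norm_sub_rev]
    exact hin j hj
  have hA_out : ∀ j ∈ Ico k n, R ≤ A j := by
    intro j hj
    rw [mem_Ico] at hj
    simp only [hA]
    rw [norm_sub_rev]
    exact hout j hj.1 hj.2
  set P : ℝ := ∏ j ∈ Ico k n, A j with hPdef
  clear_value P
  have hP0 : 0 < P := by
    rw [hPdef]
    exact Finset.prod_pos fun j hj => lt_of_lt_of_le hR0 (hA_out j hj)
  set E : ℕ → ℝ := fun d => ∑ t ∈ Finset.powersetCard d (range n), ∏ j ∈ t, A j with hE
  set S : ℕ → ℂ := fun d => ∑ t ∈ Finset.powersetCard d (range n), ∏ j ∈ t, (m - z j)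
    with hS
  clear_value E S
  have hE0 : ∀ d, 0 ≤ E d := by
    intro d
    simp only [hE]
    exact Finset.sum_nonneg fun t ht => Finset.prod_nonneg fun j _ => hA0 j
  have hSE : ∀ d, ‖S d‖ ≤ E d := by
    intro d
    simp only [hS, hE]
    refine le_trans (norm_sum_le _ _) (Finset.sum_le_sum fun t ht => ?_)
    rw [norm_prod]
    refine le_of_eq (Finset.prod_congr rfl fun j _ => ?_)
    simp only [hA]
  -- product bound
  have hGFle : ∀ σ : ℝ, 0 < σ →
      ∏ j ∈ range n, (A j + σ) ≤ (r + σ)^k * (P * (1 + σ/R)^(n-k)) := by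
    intro σ hσ
    rw [range_eq_Ico, ← Finset.prod_Ico_consecutive _ (Nat.zero_le k) hk]
    have h1 : ∏ j ∈ Ico 0 k, (A j + σ) ≤ (r + σ)^k := by
      have hle : ∀ j ∈ Ico 0 k, A j + σ ≤ r + σ := by
        intro j hj
        rw [mem_Ico] at hj
        linarith only [hA_in j hj.2]
      calc ∏ j ∈ Ico 0 k, (A j + σ)
          ≤ ∏ j ∈ Ico 0 k, (r + σ) :=
            Finset.prod_le_prod (fun j _ => add_nonneg (hA0 j) hσ.le) hle
        _ = (r + σ)^k := by rw [Finset.prod_const, Nat.card_Ico, Nat.sub_zero]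
    have h2 : ∏ j ∈ Ico k n, (A j + σ) ≤ P * (1 + σ/R)^(n-k) := by
      have hfac : ∀ j ∈ Ico k n, A j + σ ≤ A j * (1 + σ/R) := by
        intro j hj
        have hAj := hA_out j hj
        have hdiv : 0 ≤ σ/R := div_nonneg hσ.le hR0.le
        have h5 : R * (σ/R) ≤ A j * (σ/R) := mul_le_mul_of_nonneg_right hAj hdiv
        have h6 : R * (σ/R) = σ := by field_simp
        have h7 : A j * (1 + σ/R) = A j + A j * (σ/R) := by ring
        rw [h7]
        linarith only [h5, h6]
      calc ∏ j ∈ Ico k n, (A j + σ)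
          ≤ ∏ j ∈ Ico k n, (A j * (1 + σ/R)) :=
            Finset.prod_le_prod (fun j _ => add_nonneg (hA0 j) hσ.le) hfac
        _ = P * (1 + σ/R)^(n-k) := by
            rw [Finset.prod_mul_distrib, Finset.prod_const, Nat.card_Ico, hPdef]
    have hnn2 : 0 ≤ (r + σ)^k := pow_nonneg (by linarith) k
    exact mul_le_mul h1 h2 (Finset.prod_nonneg fun j _ => add_nonneg (hA0 j) hσ.le) hnn2
  -- single-term extraction from the GF
  have hsingle : ∀ σ : ℝ, 0 ≤ σ → ∀ d ∈ range (n+1),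
      E d * σ^(n-d) ≤ ∏ j ∈ range n, (A j + σ) := by
    intro σ hσ d hd
    have h0 : E d * σ^(n-d)
        = (∑ t ∈ Finset.powersetCard d (range n), ∏ j ∈ t, A j) * σ^(n-d) := by
      simp only [hE]
    rw [h0, ← TTS_gf n A σ]
    exact Finset.single_le_sum (f := fun e =>
      (∑ t ∈ Finset.powersetCard e (range n), ∏ j ∈ t, A j) * σ^(n-e)) (fun e _ => mul_nonneg
      (Finset.sum_nonneg fun t _ => Finset.prod_nonneg fun j _ => hA0 j)
      (pow_nonneg hσ _)) hd
  -- lower bound on |S (n-k)|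
  have hIcoMem : Ico k n ∈ Finset.powersetCard (n-k) (range n) := by
    rw [Finset.mem_powersetCard]
    exact ⟨fun x hx => by rw [mem_Ico] at hx; rw [mem_range]; exact hx.2, Nat.card_Ico k n⟩
  have hEnk : E (n-k) ≤ 128/105 * P := by
    have hterm := hsingle σ₁ hσ₁0.le (n-k) (by rw [mem_range]; omega)
    rw [Nat.sub_sub_self hk] at hterm
    have hGF := hGFle σ₁ hσ₁0
    have hx1 : σ₁/R = 1/(8*(n:ℝ)) := by
      rw [hσ₁def, hRdef]
      rw [div_eq_div_iff (by positivity) (by positivity)]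
      ring
    have hpow1 : (1 + σ₁/R)^(n-k) ≤ 8/7 := by
      have hb : (↑(n-k):ℝ) * (σ₁/R) ≤ 1/8 := by
        rw [hx1]
        have hle : (↑(n-k):ℝ) ≤ (n:ℝ) := by exact_mod_cast Nat.sub_le n k
        have he : (n:ℝ) * (1/(8*(n:ℝ))) = 1/8 := by
          rw [mul_one_div, div_eq_div_iff (by positivity) (by norm_num)]
          ring
        have h9 := mul_le_mul_of_nonneg_right hle
          (le_of_lt (by positivity : (0:ℝ) < 1/(8*(n:ℝ))))
        linarith only [he, h9]
      have := TTS_pow_le (div_nonneg hσ₁0.le hR0.le) (n-k) hb (by norm_num)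
      linarith only [this]
    have hy1 : (k:ℝ) * (r/σ₁) ≤ 1/16 := by
      have e1 : r/σ₁ = 2/(c₂*M*(n:ℝ)^2) := by
        rw [hσ₁def]
        rw [div_eq_div_iff (by positivity) (by positivity)]
        ring
      rw [e1, mul_div_assoc']
      rw [div_le_div_iff₀ (by positivity) (by norm_num)]
      have h2k : 2*(k:ℝ) ≤ M*(n:ℝ) := by
        nlinarith only [hMk, hMn2, hM1, hn2, hM0, mul_le_mul_of_nonneg_left hn2 hM0.le,
          mul_le_mul_of_nonneg_right hMk (by norm_num : (0:ℝ) ≤ 2)]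
      have hbig : 16*M*(M*(n:ℝ)) ≤ (c₂*(n:ℝ))*(M*(n:ℝ)) :=
        mul_le_mul_of_nonneg_right hc2nM (by positivity)
      nlinarith only [h2k, hbig, mul_nonneg (sub_nonneg.2 hM1)
        (mul_nonneg hM0.le hnR.le)]
    have hpow2 : (r + σ₁)^k ≤ 16/15 * σ₁^k := by
      have hyp : (1 + r/σ₁)^k ≤ 16/15 := by
        have := TTS_pow_le (div_nonneg hr.le hσ₁0.le) k hy1 (by norm_num)
        linarith only [this]
      have hrw : r + σ₁ = σ₁ * (1 + r/σ₁) := by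
        field_simp
        ring
      rw [hrw, mul_pow]
      have hp : (0:ℝ) ≤ σ₁^k := pow_nonneg hσ₁0.le k
      calc σ₁^k * (1 + r/σ₁)^k ≤ σ₁^k * (16/15) :=
            mul_le_mul_of_nonneg_left hyp hp
        _ = 16/15 * σ₁^k := by ring
    have hσ₁k : 0 < σ₁^k := pow_pos hσ₁0 k
    have hchain : E (n-k) * σ₁^k ≤ (16/15 * σ₁^k) * (P * (8/7)) := by
      calc E (n-k) * σ₁^k ≤ ∏ j ∈ range n, (A j + σ₁) := hterm
        _ ≤ (r + σ₁)^k * (P * (1 + σ₁/R)^(n-k)) := hGF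
        _ ≤ (16/15 * σ₁^k) * (P * (8/7)) := by
            refine mul_le_mul hpow2 ?_ ?_ ?_
            · exact mul_le_mul_of_nonneg_left hpow1 hP0.le
            · exact mul_nonneg hP0.le (pow_nonneg (by positivity) _)
            · positivity
    have hchain' : E (n-k) * σ₁^k ≤ (128/105 * P) * σ₁^k := by
      refine le_trans hchain (le_of_eq ?_)
      ring
    exact le_of_mul_le_mul_right hchain' hσ₁k
  have hLB : 82/105 * P ≤ ‖S (n-k)‖ := by
    have hmain : ‖∏ j ∈ Ico k n, (m - z j)‖ = P := by
      rw [norm_prod, hPdef]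
      refine Finset.prod_congr rfl fun j _ => ?_
      simp only [hA]
    have hsplit : S (n-k) = (∏ j ∈ Ico k n, (m - z j)) +
        ∑ t ∈ (Finset.powersetCard (n-k) (range n)).erase (Ico k n),
          ∏ j ∈ t, (m - z j) := by
      simp only [hS]
      exact (Finset.add_sum_erase _ _ hIcoMem).symm
    have hrest : ‖∑ t ∈ (Finset.powersetCard (n-k) (range n)).erase (Ico k n),
        ∏ j ∈ t, (m - z j)‖ ≤ E (n-k) - P := by
      refine le_trans (norm_sum_le _ _) ?_
      have heq : ∑ t ∈ (Finset.powersetCard (n-k) (range n)).erase (Ico k n),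
          ‖∏ j ∈ t, (m - z j)‖
          = ∑ t ∈ (Finset.powersetCard (n-k) (range n)).erase (Ico k n),
            ∏ j ∈ t, A j := by
        refine Finset.sum_congr rfl fun t ht => ?_
        rw [norm_prod]
        refine Finset.prod_congr rfl fun j _ => ?_
        simp only [hA]
      rw [heq, Finset.sum_erase_eq_sub hIcoMem]
      have h1 : ∑ t ∈ Finset.powersetCard (n-k) (range n), ∏ j ∈ t, A j = E (n-k) := by
        simp only [hE]
      have h2 : ∏ j ∈ Ico k n, A j = P := hPdef.symm
      rw [h1, h2]
    have htri : P ≤ ‖S (n-k)‖ +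
        ‖∑ t ∈ (Finset.powersetCard (n-k) (range n)).erase (Ico k n),
          ∏ j ∈ t, (m - z j)‖ := by
      rw [← hmain]
      have h5 : (∏ j ∈ Ico k n, (m - z j)) = S (n-k) -
          ∑ t ∈ (Finset.powersetCard (n-k) (range n)).erase (Ico k n),
            ∏ j ∈ t, (m - z j) := by rw [hsplit]; ring
      rw [h5]
      exact norm_sub_le _ _
    linarith only [htri, hrest, hEnk]
  have hSnk0 : 0 < ‖S (n-k)‖ :=
    lt_of_lt_of_le (mul_pos (by norm_num : (0:ℝ) < 82/105) hP0) hLB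
  have hSnkne : S (n-k) ≠ 0 := by
    intro h
    rw [h] at hSnk0
    simp at hSnk0
  -- derivative evaluations
  have hD : ∀ i, i ≤ n → (Polynomial.derivative^[i] F).eval m
      = (i.factorial : ℂ) * (a * S (n-i)) := by
    intro i hi
    rw [TTS_deriv_eval n a z m F hF i hi]
    simp only [hS]
  have hDk := hD k hk
  have hDkne : (Polynomial.derivative^[k] F).eval m ≠ 0 := by
    rw [hDk]
    refine mul_ne_zero ?_ (mul_ne_zero ha hSnkne)
    exact_mod_cast Nat.factorial_ne_zero k
  refine ⟨hDkne, ?_⟩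
  have habs : ‖(Polynomial.derivative^[k] F).eval m‖
      = (k.factorial : ℝ) * (‖a‖ * ‖S (n-k)‖) := by
    rw [hDk, norm_mul, norm_mul, Complex.norm_natCast]
  have ha0 : 0 < ‖a‖ := by
    rw [norm_pos_iff]; exact ha
  have hterm_eq : ∀ i ∈ Icc (k+1) n,
      ‖(Polynomial.derivative^[i] F).eval m‖ * ρ ^ (i - k) * (Nat.factorial k) /
        (‖(Polynomial.derivative^[k] F).eval m‖ * (Nat.factorial i))
      = ‖S (n-i)‖ * ρ^(i-k) / ‖S (n-k)‖ := by
    intro i hi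
    rw [mem_Icc] at hi
    have habsi : ‖(Polynomial.derivative^[i] F).eval m‖
        = (i.factorial : ℝ) * (‖a‖ * ‖S (n-i)‖) := by
      rw [hD i hi.2, norm_mul, norm_mul, Complex.norm_natCast]
    rw [habsi, habs]
    have hkf : ((k.factorial : ℝ)) ≠ 0 := by exact_mod_cast Nat.factorial_ne_zero k
    have hif : ((i.factorial : ℝ)) ≠ 0 := by exact_mod_cast Nat.factorial_ne_zero i
    field_simp
  rw [Finset.sum_congr rfl hterm_eq]
  -- bound the numerator sum
  have hnum : ∑ i ∈ Icc (k+1) n, ‖S (n-i)‖ * ρ^(i-k)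
      ≤ 32/(93*K) * P := by
    have hstep1 : ∀ i ∈ Icc (k+1) n,
        ‖S (n-i)‖ * ρ^(i-k) ≤ 1/(4*K) * (E (n-i) * σ₂^(i-k)) := by
      intro i hi
      rw [mem_Icc] at hi
      have hρσ : ρ^(i-k) ≤ 1/(4*K) * σ₂^(i-k) := by
        have h4K : (1:ℝ) ≤ 4*K := by linarith
        have h4K0 : (0:ℝ) < 4*K := by linarith
        have hKpow : 4*K ≤ (4*K)^(i-k) := le_self_pow₀ h4K (by omega)
        have hmp : σ₂^(i-k) = (4*K)^(i-k) * ρ^(i-k) := by rw [hσ₂def, mul_pow]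
        rw [hmp]
        have hρp : (0:ℝ) ≤ ρ^(i-k) := pow_nonneg hρ0.le _
        have h8 : (4*K) * ρ^(i-k) ≤ (4*K)^(i-k) * ρ^(i-k) :=
          mul_le_mul_of_nonneg_right hKpow hρp
        have h9 : 1/(4*K) * ((4*K) * ρ^(i-k)) = ρ^(i-k) := by
          field_simp
        calc ρ^(i-k) = 1/(4*K) * ((4*K) * ρ^(i-k)) := h9.symm
          _ ≤ 1/(4*K) * ((4*K)^(i-k) * ρ^(i-k)) :=
              mul_le_mul_of_nonneg_left h8 (div_nonneg (by norm_num) h4K0.le)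
      calc ‖S (n-i)‖ * ρ^(i-k)
          ≤ E (n-i) * ρ^(i-k) :=
            mul_le_mul_of_nonneg_right (hSE _) (pow_nonneg hρ0.le _)
        _ ≤ E (n-i) * (1/(4*K) * σ₂^(i-k)) :=
            mul_le_mul_of_nonneg_left hρσ (hE0 _)
        _ = 1/(4*K) * (E (n-i) * σ₂^(i-k)) := by ring
    have hstep2 : ∑ i ∈ Icc (k+1) n, E (n-i) * σ₂^(i-k) ≤ 4/3 * (32/31) * P := by
      have hσ₂k : 0 < σ₂^k := pow_pos hσ₂0 k
      have hkey : (∑ i ∈ Icc (k+1) n, E (n-i) * σ₂^(i-k)) * σ₂^k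
          ≤ (32/31 * σ₂^k) * (P * (4/3)) := by
        have hsum_eq : (∑ i ∈ Icc (k+1) n, E (n-i) * σ₂^(i-k)) * σ₂^k
            = ∑ i ∈ Icc (k+1) n, E (n-i) * σ₂^(n-(n-i)) := by
          rw [Finset.sum_mul]
          refine Finset.sum_congr rfl fun i hi => ?_
          rw [mem_Icc] at hi
          have h1 : n - (n - i) = i := by omega
          have h2 : (i-k) + k = i := by omega
          rw [h1, mul_assoc, ← pow_add, h2]
        have himg : ∑ i ∈ Icc (k+1) n, E (n-i) * σ₂^(n-(n-i))
            = ∑ d ∈ (Icc (k+1) n).image (fun i => n - i), E d * σ₂^(n-d) := by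
          rw [Finset.sum_image]
          intro x hx y hy hxy
          rw [mem_coe, mem_Icc] at hx hy
          beta_reduce at hxy
          omega
        have hsub : (Icc (k+1) n).image (fun i => n - i) ⊆ range (n+1) := by
          intro d hd
          rw [Finset.mem_image] at hd
          obtain ⟨i, hi, rfl⟩ := hd
          rw [mem_range]
          omega
        have hmono : ∑ d ∈ (Icc (k+1) n).image (fun i => n - i), E d * σ₂^(n-d)
            ≤ ∑ d ∈ range (n+1), E d * σ₂^(n-d) :=
          Finset.sum_le_sum_of_subset_of_nonneg hsub
            (fun d _ _ => mul_nonneg (hE0 d) (pow_nonneg hσ₂0.le _))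
        have hGF2 : ∑ d ∈ range (n+1), E d * σ₂^(n-d) = ∏ j ∈ range n, (A j + σ₂) := by
          rw [← TTS_gf n A σ₂]
          refine Finset.sum_congr rfl fun d _ => ?_
          simp only [hE]
        have hGFle2 := hGFle σ₂ hσ₂0
        have hx2 : (↑(n-k):ℝ) * (σ₂/R) ≤ 1/4 := by
          have hσR : σ₂/R = K*c₁/(c₂*M*(n:ℝ)^2) := by
            rw [hσ₂def, hρdef, hRdef]
            rw [div_eq_div_iff (by positivity) (by positivity)]
            ring
          have h4' : (n:ℝ) * (K*c₁/(c₂*M*(n:ℝ)^2)) ≤ 1/4 := by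
            rw [mul_div_assoc']
            rw [div_le_div_iff₀ (by positivity) (by norm_num)]
            nlinarith only [mul_nonneg (mul_nonneg (sub_nonneg.2 hc2c1) hM0.le)
                (by positivity : (0:ℝ) ≤ (n:ℝ)^2),
              mul_nonneg (mul_nonneg (mul_pos hK0 hc1pos).le hnR.le)
                (by linarith : (0:ℝ) ≤ M*(n:ℝ) - 2),
              mul_pos (mul_pos hK0 hc1pos) hnR]
          have hle : (↑(n-k):ℝ) ≤ (n:ℝ) := by exact_mod_cast Nat.sub_le n k
          have h0σR : 0 ≤ σ₂/R := div_nonneg hσ₂0.le hR0.le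
          calc (↑(n-k):ℝ) * (σ₂/R) ≤ (n:ℝ) * (σ₂/R) :=
                mul_le_mul_of_nonneg_right hle h0σR
            _ = (n:ℝ) * (K*c₁/(c₂*M*(n:ℝ)^2)) := by rw [hσR]
            _ ≤ 1/4 := h4'
        have hpow3 : (1 + σ₂/R)^(n-k) ≤ 4/3 := by
          have := TTS_pow_le (div_nonneg hσ₂0.le hR0.le) (n-k) hx2 (by norm_num)
          linarith only [this]
        have hy2 : (k:ℝ) * (r/σ₂) ≤ 1/32 := by
          have hrσ : r/σ₂ = 1/(4*K*c₁*(n:ℝ)) := by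
            rw [hσ₂def, hρdef]
            rw [div_eq_div_iff (by positivity) (by positivity)]
            ring
          rw [hrσ, mul_one_div, div_le_div_iff₀ (by positivity) (by norm_num)]
          have h32 : 32*K*M ≤ 4*K*(c₁*(n:ℝ)) := by
            nlinarith only [mul_le_mul_of_nonneg_left hc1n (by linarith : (0:ℝ) ≤ 4*K),
              mul_nonneg (mul_nonneg (by norm_num : (0:ℝ) ≤ 32) (sub_nonneg.2 hK))
                (mul_pos hK0 hM0).le]
          nlinarith only [h32, hMk, mul_nonneg (sub_nonneg.2 hK) hM0.le,
            mul_le_mul_of_nonneg_right hMk (by norm_num : (0:ℝ) ≤ 32),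
            mul_nonneg (mul_nonneg (by norm_num : (0:ℝ) ≤ 32) (sub_nonneg.2 hK)) hM0.le]
        have hpow4 : (r + σ₂)^k ≤ 32/31 * σ₂^k := by
          have hyp : (1 + r/σ₂)^k ≤ 32/31 := by
            have := TTS_pow_le (div_nonneg hr.le hσ₂0.le) k hy2 (by norm_num)
            linarith only [this]
          have hrw : r + σ₂ = σ₂ * (1 + r/σ₂) := by
            field_simp
            ring
          rw [hrw, mul_pow]
          have hp : (0:ℝ) ≤ σ₂^k := pow_nonneg hσ₂0.le k
          calc σ₂^k * (1 + r/σ₂)^k ≤ σ₂^k * (32/31) :=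
                mul_le_mul_of_nonneg_left hyp hp
            _ = 32/31 * σ₂^k := by ring
        calc (∑ i ∈ Icc (k+1) n, E (n-i) * σ₂^(i-k)) * σ₂^k
            = ∑ i ∈ Icc (k+1) n, E (n-i) * σ₂^(n-(n-i)) := hsum_eq
          _ = ∑ d ∈ (Icc (k+1) n).image (fun i => n - i), E d * σ₂^(n-d) := himg
          _ ≤ ∑ d ∈ range (n+1), E d * σ₂^(n-d) := hmono
          _ = ∏ j ∈ range n, (A j + σ₂) := hGF2
          _ ≤ (r + σ₂)^k * (P * (1 + σ₂/R)^(n-k)) := hGFle2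
          _ ≤ (32/31 * σ₂^k) * (P * (4/3)) := by
              refine mul_le_mul hpow4 ?_ ?_ ?_
              · exact mul_le_mul_of_nonneg_left hpow3 hP0.le
              · exact mul_nonneg hP0.le (pow_nonneg (by positivity) _)
              · positivity
      have hkey' : (∑ i ∈ Icc (k+1) n, E (n-i) * σ₂^(i-k)) * σ₂^k
          ≤ (4/3 * (32/31) * P) * σ₂^k := by
        refine le_trans hkey (le_of_eq ?_)
        ring
      exact le_of_mul_le_mul_right hkey' hσ₂k
    calc ∑ i ∈ Icc (k+1) n, ‖S (n-i)‖ * ρ^(i-k)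
        ≤ ∑ i ∈ Icc (k+1) n, 1/(4*K) * (E (n-i) * σ₂^(i-k)) :=
          Finset.sum_le_sum hstep1
      _ = 1/(4*K) * ∑ i ∈ Icc (k+1) n, E (n-i) * σ₂^(i-k) := by
          rw [Finset.mul_sum]
      _ ≤ 1/(4*K) * (4/3 * (32/31) * P) :=
          mul_le_mul_of_nonneg_left hstep2 (div_nonneg (by norm_num) (by linarith))
      _ = 32/(93*K) * P := by
          have hc : (32:ℝ)/(93*K) = 1/(4*K) * (4/3*(32/31)) := by
            rw [div_mul_eq_mul_div, one_mul, div_eq_div_iff (by positivity) (by positivity)]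
            ring
          rw [hc]
          ring
  -- final computation
  rw [← Finset.sum_div]
  have hfin : (32/(93*K) * P) / (82/105 * P) < 1/(2*K) := by
    have h1 : (32/(93*K) * P) / (82/105 * P) = (32/(93*K)) / (82/105) :=
      mul_div_mul_right _ _ (ne_of_gt hP0)
    have h2 : (32/(93*K)) / (82/105) = 3360/(7626*K) := by
      rw [div_div_eq_mul_div, div_mul_eq_mul_div, div_eq_div_iff (by positivity) (by positivity)]
      field_simp
      ring
    rw [h1, h2, div_lt_div_iff₀ (by linarith : (0:ℝ) < 7626*K)
      (by linarith : (0:ℝ) < 2*K)]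
    nlinarith only [hK0]
  calc (∑ i ∈ Icc (k+1) n, ‖S (n-i)‖ * ρ^(i-k)) / ‖S (n-k)‖
      ≤ (32/(93*K) * P) / (82/105 * P) := by
        refine div_le_div₀ ?_ hnum (mul_pos (by norm_num) hP0) hLB
        exact mul_nonneg (div_nonneg (by norm_num) (by linarith)) hP0.le
    _ < 1/(2*K) := hfin
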